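/- For every symplectic 2n×2n matrix S = [[A, B],[C, D]] there exist unique matrices P = Pᵀ (real symmetric) and L = Lᵀ positive definite such that S(B^{2n}(√ℏ)) = V_P M_L (B^{2n}(√ℏ)) as subsets of ℝ^{2n}, where V_P = [[I, 0],[−P, I]] and M_L = [[L⁻¹, 0],[0, L]]; these matrices are given by L = (AAᵀ + BBᵀ)^{−1/2} and P = −(CAᵀ + DBᵀ)(AAᵀ + BBᵀ)^{−1}. (Hence every quantum blob can be written in this normal form in exactly one way.) -/

import Mathlib

open Matrix

/-- The standard symplectic matrix `J = [[0, I],[−I, 0]]`. -/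
def stdJ (n : ℕ) : Matrix (Fin n ⊕ Fin n) (Fin n ⊕ Fin n) ℝ :=
  fromBlocks 0 1 (-1) 0

/-- A real `2n×2n` matrix is symplectic if `Sᵀ J S = J`. -/
def IsSymplecticMat {n : ℕ} (S : Matrix (Fin n ⊕ Fin n) (Fin n ⊕ Fin n) ℝ) : Prop :=
  Sᵀ * stdJ n * S = stdJ n

/-- `V_P = [[I, 0],[−P, I]]`. -/
def VP {n : ℕ} (P : Matrix (Fin n) (Fin n) ℝ) : Matrix (Fin n ⊕ Fin n) (Fin n ⊕ Fin n) ℝ :=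
  fromBlocks 1 0 (-P) 1

/-- `M_L = [[L⁻¹, 0],[0, L]]`. -/
noncomputable def ML {n : ℕ} (L : Matrix (Fin n) (Fin n) ℝ) :
    Matrix (Fin n ⊕ Fin n) (Fin n ⊕ Fin n) ℝ :=
  fromBlocks L⁻¹ 0 0 L

/-- The closed Euclidean ball of radius `R` centered at `0` in `ℝ^{2n}`. -/
def euclBall (n : ℕ) (R : ℝ) : Set (Fin n ⊕ Fin n → ℝ) :=
  {z | ∑ i, (z i) ^ 2 ≤ R ^ 2}

namespace QBaux

variable {n : ℕ}

lemma sum_sq_eq_dot (z : Fin n ⊕ Fin n → ℝ) : ∑ i, z i ^ 2 = z ⬝ᵥ z := by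
  simp [dotProduct, sq]

lemma quad_eq' {m : Type*} [Fintype m] [DecidableEq m]
    (M : Matrix m m ℝ) (z : m → ℝ) :
    (M *ᵥ z) ⬝ᵥ (M *ᵥ z) = z ⬝ᵥ (Mᵀ * M) *ᵥ z := by
  rw [← mulVec_mulVec, Matrix.dotProduct_mulVec z Mᵀ (M *ᵥ z), vecMul_transpose]

lemma quad_eq (M : Matrix (Fin n ⊕ Fin n) (Fin n ⊕ Fin n) ℝ) (z : Fin n ⊕ Fin n → ℝ) :
    (M *ᵥ z) ⬝ᵥ (M *ᵥ z) = z ⬝ᵥ (Mᵀ * M) *ᵥ z :=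
  quad_eq' M z

lemma norm_pres {O : Matrix (Fin n ⊕ Fin n) (Fin n ⊕ Fin n) ℝ} (h : Oᵀ * O = 1)
    (z : Fin n ⊕ Fin n → ℝ) : ∑ i, (O *ᵥ z) i ^ 2 = ∑ i, z i ^ 2 := by
  rw [sum_sq_eq_dot, sum_sq_eq_dot, quad_eq, h, one_mulVec]

lemma orth_image {O : Matrix (Fin n ⊕ Fin n) (Fin n ⊕ Fin n) ℝ} (h : O * Oᵀ = 1) (R : ℝ) :
    (fun z => O *ᵥ z) '' euclBall n R = euclBall n R := by
  have h' : Oᵀ * O = 1 := mul_eq_one_comm.mp h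
  apply Set.Subset.antisymm
  · rintro _ ⟨z, hz, rfl⟩
    show ∑ i, (O *ᵥ z) i ^ 2 ≤ R ^ 2
    rw [norm_pres h']
    exact hz
  · intro z hz
    refine ⟨Oᵀ *ᵥ z, ?_, ?_⟩
    · have h2 : Oᵀᵀ * Oᵀ = 1 := by rwa [transpose_transpose]
      show ∑ i, (Oᵀ *ᵥ z) i ^ 2 ≤ R ^ 2
      rw [norm_pres h2]
      exact hz
    · simp only [mulVec_mulVec, h, one_mulVec]

lemma image_eq_of_gram {M N : Matrix (Fin n ⊕ Fin n) (Fin n ⊕ Fin n) ℝ}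
    (hN : IsUnit N.det) (h : M * Mᵀ = N * Nᵀ) (R : ℝ) :
    (fun z => M *ᵥ z) '' euclBall n R = (fun z => N *ᵥ z) '' euclBall n R := by
  have hNt : IsUnit Nᵀ.det := by rwa [det_transpose]
  have hM : M = N * (N⁻¹ * M) := by
    rw [← mul_assoc, mul_nonsing_inv _ hN, one_mul]
  have hOO : (N⁻¹ * M) * (N⁻¹ * M)ᵀ = 1 := by
    rw [transpose_mul, transpose_nonsing_inv]
    simp only [← mul_assoc]
    rw [mul_assoc N⁻¹ M Mᵀ, h, ← mul_assoc, nonsing_inv_mul _ hN, one_mul,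
      mul_nonsing_inv _ hNt]
  calc (fun z => M *ᵥ z) '' euclBall n R
      = ((fun z => N *ᵥ z) ∘ (fun z => (N⁻¹ * M) *ᵥ z)) '' euclBall n R := by
        have hfun : (fun z => M *ᵥ z) =
            ((fun z => N *ᵥ z) ∘ (fun z => (N⁻¹ * M) *ᵥ z)) := by
          funext z
          show M *ᵥ z = N *ᵥ ((N⁻¹ * M) *ᵥ z)
          conv_rhs => rw [mulVec_mulVec, ← hM]
        rw [hfun]
    _ = (fun z => N *ᵥ z) '' ((fun z => (N⁻¹ * M) *ᵥ z) '' euclBall n R) := by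
        rw [Set.image_comp]
    _ = (fun z => N *ᵥ z) '' euclBall n R := by rw [orth_image hOO]

lemma contract_of_maps_ball {T : Matrix (Fin n ⊕ Fin n) (Fin n ⊕ Fin n) ℝ} {R : ℝ} (hR : 0 < R)
    (h : ∀ z ∈ euclBall n R, T *ᵥ z ∈ euclBall n R) (z : Fin n ⊕ Fin n → ℝ) :
    ∑ i, (T *ᵥ z) i ^ 2 ≤ ∑ i, z i ^ 2 := by
  rcases eq_or_ne z 0 with rfl | hz
  · simp [mulVec_zero]
  · have hq : 0 < ∑ i, z i ^ 2 := by
      obtain ⟨i, hi⟩ := Function.ne_iff.mp hz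
      exact Finset.sum_pos' (fun j _ => sq_nonneg _)
        ⟨i, Finset.mem_univ i, (sq_nonneg _).lt_of_ne (Ne.symm (pow_ne_zero 2 hi))⟩
    set q := ∑ i, z i ^ 2 with hqdef
    set c := R / Real.sqrt q with hc
    have hcpos : 0 < c := div_pos hR (Real.sqrt_pos.mpr hq)
    have hc2 : c ^ 2 * q = R ^ 2 := by
      rw [hc, div_pow, Real.sq_sqrt hq.le, div_mul_cancel₀ _ hq.ne']
    have hcz : c • z ∈ euclBall n R := by
      simp only [euclBall, Set.mem_setOf_eq, Pi.smul_apply, smul_eq_mul, mul_pow,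
        ← Finset.mul_sum]
      rw [← hqdef, hc2]
    have h2 := h _ hcz
    simp only [euclBall, Set.mem_setOf_eq, mulVec_smul, Pi.smul_apply, smul_eq_mul,
      mul_pow, ← Finset.mul_sum] at h2
    have hc2pos : (0:ℝ) < c ^ 2 := by positivity
    nlinarith [h2, hc2]

lemma gram_of_image_eq {M N : Matrix (Fin n ⊕ Fin n) (Fin n ⊕ Fin n) ℝ}
    (hM : IsUnit M.det) (hN : IsUnit N.det) {R : ℝ} (hR : 0 < R)
    (h : (fun z => M *ᵥ z) '' euclBall n R = (fun z => N *ᵥ z) '' euclBall n R) :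
    M * Mᵀ = N * Nᵀ := by
  have key : ∀ (P Q : Matrix (Fin n ⊕ Fin n) (Fin n ⊕ Fin n) ℝ), IsUnit Q.det →
      (fun z => P *ᵥ z) '' euclBall n R = (fun z => Q *ᵥ z) '' euclBall n R →
      ∀ z ∈ euclBall n R, (Q⁻¹ * P) *ᵥ z ∈ euclBall n R := by
    intro P Q hQ him z hz
    have hmem : P *ᵥ z ∈ (fun z => Q *ᵥ z) '' euclBall n R := him ▸ ⟨z, hz, rfl⟩
    obtain ⟨w, hw, hQw⟩ := hmem
    have hQw' : Q *ᵥ w = P *ᵥ z := hQw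
    have : (Q⁻¹ * P) *ᵥ z = w := by
      rw [← mulVec_mulVec, ← hQw', mulVec_mulVec, nonsing_inv_mul _ hQ, one_mulVec]
    rwa [this]
  have h1 := contract_of_maps_ball hR (key M N hN h)
  have h2 := contract_of_maps_ball hR (key N M hM h.symm)
  set T := N⁻¹ * M with hT
  have hid : (M⁻¹ * N) * T = 1 := by
    rw [hT, mul_assoc, ← mul_assoc N, mul_nonsing_inv _ hN, one_mul, nonsing_inv_mul _ hM]
  have heq : ∀ z, ∑ i, (T *ᵥ z) i ^ 2 = ∑ i, z i ^ 2 := by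
    intro z
    refine le_antisymm (h1 z) ?_
    have h3 := h2 (T *ᵥ z)
    rwa [mulVec_mulVec, hid, one_mulVec] at h3
  have hq : ∀ z, z ⬝ᵥ (Tᵀ * T) *ᵥ z = z ⬝ᵥ z := by
    intro z
    rw [← quad_eq, ← sum_sq_eq_dot, ← sum_sq_eq_dot, heq z]
  have hsymm : (Tᵀ * T)ᵀ = Tᵀ * T := by rw [transpose_mul, transpose_transpose]
  have hsw : ∀ x y, y ⬝ᵥ (Tᵀ * T) *ᵥ x = x ⬝ᵥ (Tᵀ * T) *ᵥ y := by
    intro x y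
    rw [dotProduct_mulVec, dotProduct_comm, ← mulVec_transpose, hsymm]
  have hbil : ∀ x y, x ⬝ᵥ (Tᵀ * T) *ᵥ y = x ⬝ᵥ y := by
    intro x y
    have e1 := hq (x + y)
    have e2 := hq x
    have e3 := hq y
    have e4 := hsw x y
    simp only [mulVec_add, add_mulVec, dotProduct_add, add_dotProduct] at e1
    have e5 : y ⬝ᵥ x = x ⬝ᵥ y := dotProduct_comm y x
    linarith
  have hTT : Tᵀ * T = 1 := by
    ext i j
    have := hbil (Pi.single i 1) (Pi.single j 1)
    rw [mulVec_single, single_dotProduct, single_dotProduct] at this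
    simpa [Matrix.one_apply, Pi.single_apply, eq_comm] using this
  have hT1 : T * Tᵀ = 1 := mul_eq_one_comm.mp hTT
  have hMNT : M = N * T := by
    rw [hT, ← mul_assoc, mul_nonsing_inv _ hN, one_mul]
  rw [hMNT, transpose_mul, mul_assoc, ← mul_assoc T, hT1, one_mul]

lemma VPML_form (P L : Matrix (Fin n) (Fin n) ℝ) :
    VP P * ML L = fromBlocks L⁻¹ 0 (-(P * L⁻¹)) L := by
  rw [VP, ML, fromBlocks_multiply]
  simp

lemma gram_VPML {P L : Matrix (Fin n) (Fin n) ℝ} (hP : Pᵀ = P) (hL : Lᵀ = L) :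
    (VP P * ML L) * (VP P * ML L)ᵀ =
      fromBlocks (L⁻¹ * L⁻¹) (-(L⁻¹ * (L⁻¹ * P))) (-(P * L⁻¹ * L⁻¹))
        (P * L⁻¹ * (L⁻¹ * P) + L * L) := by
  have hLi : (L⁻¹)ᵀ = L⁻¹ := by rw [transpose_nonsing_inv, hL]
  have hPLt : (-(P * L⁻¹))ᵀ = -(L⁻¹ * P) := by
    rw [transpose_neg, transpose_mul, hLi, hP]
  rw [VPML_form, fromBlocks_transpose, fromBlocks_multiply, hLi, hPLt, transpose_zero, hL]
  simp only [Matrix.mul_zero, Matrix.zero_mul, add_zero, zero_add, Matrix.neg_mul,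
    Matrix.mul_neg, neg_neg, mul_assoc]

lemma VPML_det {P L : Matrix (Fin n) (Fin n) ℝ} (hLd : IsUnit L.det) :
    IsUnit (VP P * ML L).det := by
  have h1 : L⁻¹.det * L.det = 1 := by rw [← det_mul, nonsing_inv_mul _ hLd, det_one]
  rw [VPML_form, det_fromBlocks_zero₁₂, h1]
  exact isUnit_one

open scoped MatrixOrder in
noncomputable def psdSqrt (M : Matrix (Fin n) (Fin n) ℝ) : Matrix (Fin n) (Fin n) ℝ :=
  CFC.sqrt M

open scoped MatrixOrder in
lemma psdSqrt_mul_self {M : Matrix (Fin n) (Fin n) ℝ} (hM : M.PosSemidef) :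
    psdSqrt M * psdSqrt M = M :=
  CFC.sqrt_mul_sqrt_self M hM.nonneg

open scoped MatrixOrder in
lemma posSemidef_psdSqrt (M : Matrix (Fin n) (Fin n) ℝ) : (psdSqrt M).PosSemidef :=
  (CFC.sqrt_nonneg M).posSemidef

open scoped MatrixOrder in
lemma eq_of_sq_eq_sq' {L L' : Matrix (Fin n) (Fin n) ℝ} (hL : L.PosSemidef)
    (hL' : L'.PosSemidef) (h : L ^ 2 = L' ^ 2) : L = L' :=
  (CFC.mul_self_eq_mul_self_iff L L' hL.nonneg hL'.nonneg).mp (by rw [← pow_two, ← pow_two, h])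

end QBaux

/-- Normal form of quantum blobs: for every symplectic `S = [[A,B],[C,D]]` there are unique
`P = Pᵀ` and `L = Lᵀ > 0` with `S(B^{2n}(√ℏ)) = V_P M_L (B^{2n}(√ℏ))`; they are given by
`L = (AAᵀ + BBᵀ)^{−1/2}` (i.e. `L² = (AAᵀ + BBᵀ)⁻¹`) and `P = −(CAᵀ + DBᵀ)(AAᵀ + BBᵀ)⁻¹`. -/
theorem quantum_blob_normal_form
    (n : ℕ) (hn : 1 ≤ n) (ℏ : ℝ) (hℏ : 0 < ℏ)
    (A B C D : Matrix (Fin n) (Fin n) ℝ)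
    (hS : IsSymplecticMat (fromBlocks A B C D)) :
    (∃! PL : Matrix (Fin n) (Fin n) ℝ × Matrix (Fin n) (Fin n) ℝ,
        PL.1.IsSymm ∧ PL.2.IsSymm ∧ PL.2.PosDef ∧
        (fun z => (fromBlocks A B C D).mulVec z) '' euclBall n (Real.sqrt ℏ) =
          (fun z => (VP PL.1 * ML PL.2).mulVec z) '' euclBall n (Real.sqrt ℏ)) ∧
      ∀ P L : Matrix (Fin n) (Fin n) ℝ,
        P.IsSymm → L.IsSymm → L.PosDef →
        (fun z => (fromBlocks A B C D).mulVec z) '' euclBall n (Real.sqrt ℏ) =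
          (fun z => (VP P * ML L).mulVec z) '' euclBall n (Real.sqrt ℏ) →
        L * L = (A * Aᵀ + B * Bᵀ)⁻¹ ∧
          P = -((C * Aᵀ + D * Bᵀ) * (A * Aᵀ + B * Bᵀ)⁻¹) := by
  classical
  set S := fromBlocks A B C D with hSdef
  set G := A * Aᵀ + B * Bᵀ with hGdef
  set Rt := A * Cᵀ + B * Dᵀ with hRtdef
  set Rm := C * Aᵀ + D * Bᵀ with hRmdef
  set H := C * Cᵀ + D * Dᵀ with hHdef
  have hR : (0:ℝ) < Real.sqrt ℏ := Real.sqrt_pos.mpr hℏ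
  -- symplectic group membership
  have hJ : stdJ n = -(Matrix.J (Fin n) ℝ) := by
    rw [stdJ, Matrix.J, Matrix.fromBlocks_neg]
    norm_num
  have hSJ : Sᵀ * Matrix.J (Fin n) ℝ * S = Matrix.J (Fin n) ℝ := by
    have h0 : Sᵀ * stdJ n * S = stdJ n := hS
    rw [hJ, mul_neg, neg_mul, neg_inj] at h0
    exact h0
  have hmem : S ∈ Matrix.symplecticGroup (Fin n) ℝ := SymplecticGroup.mem_iff'.mpr hSJ
  have hdetS : IsUnit S.det := SymplecticGroup.symplectic_det hmem
  have hSJ' : S * Matrix.J (Fin n) ℝ * Sᵀ = Matrix.J (Fin n) ℝ := SymplecticGroup.mem_iff.mp hmem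
  have hS' : S * stdJ n * Sᵀ = stdJ n := by rw [hJ, mul_neg, neg_mul, hSJ']
  -- W = S Sᵀ is symplectic
  have hW : (S * Sᵀ) * stdJ n * (S * Sᵀ) = stdJ n := by
    have step : (S * Sᵀ) * stdJ n * (S * Sᵀ) = S * (Sᵀ * stdJ n * S) * Sᵀ := by
      simp only [mul_assoc]
    rw [step, hS, hS']
  -- block form of S Sᵀ
  have hSS : S * Sᵀ = fromBlocks G Rt Rm H := by
    rw [hSdef, fromBlocks_transpose, fromBlocks_multiply, hGdef, hRtdef, hRmdef, hHdef]
  -- block relations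
  have hblocks : fromBlocks G Rt Rm H * stdJ n * fromBlocks G Rt Rm H = stdJ n := by
    rw [← hSS]; exact hW
  rw [stdJ, fromBlocks_multiply, fromBlocks_multiply] at hblocks
  simp only [Matrix.mul_zero, Matrix.zero_mul, Matrix.mul_one, Matrix.one_mul,
    add_zero, zero_add, Matrix.neg_mul, Matrix.mul_neg] at hblocks
  obtain ⟨e11, e12, e21, e22⟩ := fromBlocks_inj.mp hblocks
  have hGR : G * Rm = Rt * G := (neg_add_eq_zero.mp e11).symm
  have hGH : G * H = 1 + Rt * Rt := by rw [← e12]; abel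
  -- relations from S J Sᵀ = J
  have hSJS := hS'
  rw [hSdef, stdJ, fromBlocks_transpose, fromBlocks_multiply, fromBlocks_multiply] at hSJS
  simp only [Matrix.mul_zero, Matrix.zero_mul, Matrix.mul_one, Matrix.one_mul, add_zero,
    zero_add, Matrix.neg_mul, Matrix.mul_neg] at hSJS
  obtain ⟨f11, f12, f21, f22⟩ := fromBlocks_inj.mp hSJS
  have hDA : D * Aᵀ - C * Bᵀ = 1 := by
    have h' : -(-(D * Aᵀ) + C * Bᵀ) = 1 := by rw [f21, neg_neg]
    rw [← h']; abel
  -- symmetry of blocks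
  have hGsym : Gᵀ = G := by
    rw [hGdef, transpose_add, transpose_mul, transpose_mul, transpose_transpose,
      transpose_transpose]
  have hRmT : Rmᵀ = Rt := by
    rw [hRmdef, hRtdef, transpose_add, transpose_mul, transpose_mul, transpose_transpose,
      transpose_transpose]
  -- positive definiteness of G
  have dpnn : ∀ v : Fin n → ℝ, 0 ≤ v ⬝ᵥ v := fun v => by
    simp only [dotProduct]
    exact Finset.sum_nonneg fun i _ => mul_self_nonneg _
  have quadG : ∀ x : Fin n → ℝ,
      (Aᵀ *ᵥ x) ⬝ᵥ (Aᵀ *ᵥ x) + (Bᵀ *ᵥ x) ⬝ᵥ (Bᵀ *ᵥ x) = x ⬝ᵥ G *ᵥ x := by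
    intro x
    rw [QBaux.quad_eq' Aᵀ x, QBaux.quad_eq' Bᵀ x, transpose_transpose, transpose_transpose,
      ← dotProduct_add, ← add_mulVec, ← hGdef]
  have hGpd : G.PosDef := by
    refine PosDef.of_dotProduct_mulVec_pos ?_ ?_
    · rw [Matrix.IsHermitian, conjTranspose_eq_transpose_of_trivial, hGsym]
    · intro x hx
      have hst : star x = x := by simp
      rw [hst]
      have hnn : 0 ≤ x ⬝ᵥ G *ᵥ x := by
        rw [← quadG]; exact add_nonneg (dpnn _) (dpnn _)
      refine lt_of_le_of_ne hnn fun h0 => hx ?_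
      have h0' : (Aᵀ *ᵥ x) ⬝ᵥ (Aᵀ *ᵥ x) + (Bᵀ *ᵥ x) ⬝ᵥ (Bᵀ *ᵥ x) = 0 := by
        rw [quadG, ← h0]
      have hA0 : Aᵀ *ᵥ x = 0 := dotProduct_self_eq_zero.mp
        (le_antisymm (by nlinarith [dpnn (Bᵀ *ᵥ x)]) (dpnn _))
      have hB0 : Bᵀ *ᵥ x = 0 := dotProduct_self_eq_zero.mp
        (le_antisymm (by nlinarith [dpnn (Aᵀ *ᵥ x)]) (dpnn _))
      calc x = (1 : Matrix (Fin n) (Fin n) ℝ) *ᵥ x := (one_mulVec x).symm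
        _ = (D * Aᵀ - C * Bᵀ) *ᵥ x := by rw [hDA]
        _ = D *ᵥ (Aᵀ *ᵥ x) - C *ᵥ (Bᵀ *ᵥ x) := by
            rw [sub_mulVec, mulVec_mulVec, mulVec_mulVec]
        _ = 0 := by rw [hA0, hB0, mulVec_zero, mulVec_zero, sub_zero]
  -- inverse facts for G
  have hGdet : IsUnit G.det := isUnit_iff_ne_zero.mpr hGpd.det_pos.ne'
  have hGG : G * G⁻¹ = 1 := mul_nonsing_inv _ hGdet
  have hGG' : G⁻¹ * G = 1 := nonsing_inv_mul _ hGdet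
  have hGinvsym : (G⁻¹)ᵀ = G⁻¹ := by rw [transpose_nonsing_inv, hGsym]
  have hRmG : Rm * G⁻¹ = G⁻¹ * Rt := by
    have h1 : G⁻¹ * (G * Rm) = Rm := by rw [← mul_assoc, hGG', one_mul]
    have h2 : Rt * G * G⁻¹ = Rt := by rw [mul_assoc, hGG, mul_one]
    calc Rm * G⁻¹ = G⁻¹ * (G * Rm) * G⁻¹ := by rw [h1]
      _ = G⁻¹ * (Rt * G * G⁻¹) := by rw [hGR, mul_assoc]
      _ = G⁻¹ * Rt := by rw [h2]
  -- construction of L₀ and P₀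
  have hGinvpd : (G⁻¹).PosDef := hGpd.inv
  set L0 := QBaux.psdSqrt G⁻¹ with hL0def
  have hL0sq : L0 * L0 = G⁻¹ := QBaux.psdSqrt_mul_self hGinvpd.posSemidef
  have hL0psd : L0.PosSemidef := QBaux.posSemidef_psdSqrt _
  have hL0herm : L0.IsHermitian := hL0psd.1
  have hL0sym : L0ᵀ = L0 := by
    rw [← conjTranspose_eq_transpose_of_trivial]; exact hL0herm
  have hL0det : IsUnit L0.det := by
    have hd : L0.det * L0.det = (G⁻¹).det := by rw [← det_mul, hL0sq]
    refine isUnit_iff_ne_zero.mpr fun h0 => ?_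
    rw [h0, mul_zero] at hd
    exact hGinvpd.det_pos.ne' hd.symm
  have hL0pd : L0.PosDef := by
    refine PosDef.of_dotProduct_mulVec_pos hL0herm fun x hx => ?_
    refine lt_of_le_of_ne (hL0psd.dotProduct_mulVec_nonneg x) fun h0 => hx ?_
    have hLx : L0 *ᵥ x = 0 := (hL0psd.dotProduct_mulVec_zero_iff x).mp h0.symm
    calc x = (L0⁻¹ * L0) *ᵥ x := by rw [nonsing_inv_mul _ hL0det, one_mulVec]
      _ = 0 := by rw [← mulVec_mulVec, hLx, mulVec_zero]
  set P0 := -(Rm * G⁻¹) with hP0def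
  have hP0sym : P0ᵀ = P0 := by
    rw [hP0def, transpose_neg, transpose_mul, hGinvsym, hRmT, ← hRmG]
  -- gram identity for the normal form
  have hLLG : L0⁻¹ * L0⁻¹ = G := by
    rw [← Matrix.mul_inv_rev, hL0sq, nonsing_inv_nonsing_inv _ hGdet]
  have hP0G : P0 * G = -Rm := by
    rw [hP0def, Matrix.neg_mul, mul_assoc, hGG', mul_one]
  have hgram0 : S * Sᵀ = (VP P0 * ML L0) * (VP P0 * ML L0)ᵀ := by
    rw [hSS, QBaux.gram_VPML hP0sym hL0sym]
    refine fromBlocks_inj.mpr ⟨hLLG.symm, ?_, ?_, ?_⟩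
    · rw [← mul_assoc, hLLG, hP0def, Matrix.mul_neg, neg_neg, ← mul_assoc, hGR,
        mul_assoc, hGG, mul_one]
    · rw [mul_assoc, hLLG, hP0G, neg_neg]
    · have hb : P0 * L0⁻¹ * (L0⁻¹ * P0) = Rm * (Rm * G⁻¹) := by
        rw [mul_assoc, ← mul_assoc L0⁻¹, hLLG, ← mul_assoc, hP0G, Matrix.neg_mul,
          hP0def, Matrix.mul_neg, neg_neg]
      rw [hb, hL0sq]
      have hH : H = G⁻¹ * (1 + Rt * Rt) := by
        rw [← hGH, ← mul_assoc, hGG', one_mul]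
      rw [hH, Matrix.mul_add, mul_one, ← mul_assoc, ← hRmG, mul_assoc, ← hRmG, ← mul_assoc]
      exact add_comm _ _
  have hN0det : IsUnit (VP P0 * ML L0).det := QBaux.VPML_det hL0det
  have himg0 : (fun z => S.mulVec z) '' euclBall n (Real.sqrt ℏ) =
      (fun z => (VP P0 * ML L0).mulVec z) '' euclBall n (Real.sqrt ℏ) :=
    QBaux.image_eq_of_gram hN0det hgram0 (Real.sqrt ℏ)
  -- generic uniqueness computation
  have huniq : ∀ P L : Matrix (Fin n) (Fin n) ℝ,
      P.IsSymm → L.IsSymm → L.PosDef →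
      (fun z => S.mulVec z) '' euclBall n (Real.sqrt ℏ) =
        (fun z => (VP P * ML L).mulVec z) '' euclBall n (Real.sqrt ℏ) →
      L * L = G⁻¹ ∧ P = -(Rm * G⁻¹) := by
    intro P L hPs hLs hLpd him
    have hP' : Pᵀ = P := hPs
    have hL' : Lᵀ = L := hLs
    have hLdet : IsUnit L.det := isUnit_iff_ne_zero.mpr hLpd.det_pos.ne'
    have hNdet : IsUnit (VP P * ML L).det := QBaux.VPML_det hLdet
    have hgram : S * Sᵀ = (VP P * ML L) * (VP P * ML L)ᵀ :=
      QBaux.gram_of_image_eq hdetS hNdet hR him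
    rw [hSS, QBaux.gram_VPML hP' hL'] at hgram
    obtain ⟨g11, g12, g21, g22⟩ := fromBlocks_inj.mp hgram
    have hLL : L * L = G⁻¹ := by
      rw [g11, Matrix.mul_inv_rev, nonsing_inv_nonsing_inv _ hLdet]
    have hPGm : P * G = -Rm := by
      rw [g11, ← mul_assoc, g21, neg_neg]
    have hPeq : P = -(Rm * G⁻¹) := by
      calc P = P * G * G⁻¹ := by rw [mul_assoc, hGG, mul_one]
        _ = -(Rm * G⁻¹) := by rw [hPGm, Matrix.neg_mul]
    exact ⟨hLL, hPeq⟩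
  refine ⟨⟨(P0, L0), ⟨hP0sym, hL0sym, hL0pd, himg0⟩, ?_⟩, huniq⟩
  rintro ⟨P, L⟩ ⟨hPs, hLs, hLpd, him⟩
  obtain ⟨hLL, hPeq⟩ := huniq P L hPs hLs hLpd him
  have hLeq : L = L0 := by
    apply QBaux.eq_of_sq_eq_sq' hLpd.posSemidef hL0psd
    rw [pow_two, pow_two, hLL, hL0sq]
  have hPeq' : P = P0 := by rw [hPeq, hP0def]
  exact Prod.ext hPeq' hLeq
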